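/- Let G be a graph on n ≥ 3 vertices whose Laplacian matrix has exactly two distinct nonzero eigenvalues 0 < α < β, with α of multiplicity n - 2. Then G is isomorphic to the complete bipartite graph K_{n/2,n/2} (so n is even) or the star S_n. -/

import Mathlib

open Matrix Finset

/-- The transmission of a vertex: sum of distances to all other vertices. -/
noncomputable def transmission {V : Type*} [Fintype V] (G : SimpleGraph V) (v : V) : ℕ :=
  ∑ u, G.dist v u

/-- The distance Laplacian matrix `D^L(G) = Diag(Tr) - D(G)`. -/
noncomputable def distLapMatrix {V : Type*} [Fintype V] [DecidableEq V]
    (G : SimpleGraph V) : Matrix V V ℝ :=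
  fun u v => if u = v then (transmission G u : ℝ) else -(G.dist u v : ℝ)

/-- `μ` is an eigenvalue of the real matrix `M`. -/
def IsEigenvalue {V : Type*} [Fintype V] [DecidableEq V] (M : Matrix V V ℝ) (μ : ℝ) : Prop :=
  Module.End.HasEigenvalue (Matrix.toLin' M) μ

/-- The multiplicity of `μ` as an eigenvalue of `M` (dimension of the eigenspace). -/
noncomputable def eigMult {V : Type*} [Fintype V] [DecidableEq V]
    (M : Matrix V V ℝ) (μ : ℝ) : ℕ :=
  Module.finrank ℝ (Module.End.eigenspace (Matrix.toLin' M) μ)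

/-- Complete multipartite graph on `Fin n` determined by a block function. -/
def multipartiteOn (n : ℕ) (blk : Fin n → ℕ) : SimpleGraph (Fin n) :=
  SimpleGraph.fromRel (fun u v => blk u ≠ blk v)

/-- The star `S_n` on `Fin n` with center `0`. -/
def starGraph (n : ℕ) : SimpleGraph (Fin n) :=
  SimpleGraph.fromRel (fun u v => u.val = 0)

lemma aux_perm {γ : Type*} [Fintype γ] [DecidableEq γ] (s t : Finset γ)
    (h : s.card = t.card) : ∃ σ : Equiv.Perm γ, ∀ x, σ x ∈ t ↔ x ∈ s := by
  classical
  have hc : sᶜ.card = tᶜ.card := by simp [Finset.card_compl, h]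
  let e1 : {x // x ∈ s} ≃ {x // x ∈ t} := Finset.equivOfCardEq h
  let e2 : {x // ¬ x ∈ s} ≃ {x // ¬ x ∈ t} :=
    ((Equiv.subtypeEquivRight (fun x => (Finset.mem_compl (s := s)).symm)).trans
      (Finset.equivOfCardEq hc)).trans
      (Equiv.subtypeEquivRight (fun x => (Finset.mem_compl (s := t))))
  refine ⟨(Equiv.sumCompl (· ∈ s)).symm.trans ((Equiv.sumCongr e1 e2).trans
    (Equiv.sumCompl (· ∈ t))), fun x => ?_⟩
  by_cases hx : x ∈ s
  · simp only [Equiv.trans_apply, Equiv.sumCompl_symm_apply_of_pos hx,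
      Equiv.sumCongr_apply, Sum.map_inl, Equiv.sumCompl_apply_inl]
    exact iff_of_true (e1 ⟨x, hx⟩).2 hx
  · simp only [Equiv.trans_apply, Equiv.sumCompl_symm_apply_of_neg hx,
      Equiv.sumCongr_apply, Sum.map_inr, Equiv.sumCompl_apply_inr]
    exact iff_of_false (e2 ⟨x, hx⟩).2 hx

lemma aux_filter_card {n m : ℕ} (h : m ≤ n) :
    (Finset.univ.filter (fun v : Fin n => (v : ℕ) < m)).card = m := by
  have : Finset.univ.filter (fun v : Fin n => (v : ℕ) < m)
      = Finset.map (Fin.castLEEmb h) Finset.univ := by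
    ext a
    simp only [Finset.mem_filter, Finset.mem_univ, true_and, Finset.mem_map]
    constructor
    · intro ha; exact ⟨⟨(a : ℕ), ha⟩, by simp [Fin.castLEEmb, Fin.ext_iff]⟩
    · rintro ⟨b, rfl⟩; exact b.isLt
  rw [this, Finset.card_map, Finset.card_univ, Fintype.card_fin]

lemma aux_pos_neg {n : ℕ} (w : Fin n → ℝ) (hsum : ∑ i, w i = 0) {k : Fin n}
    (hk : w k ≠ 0) : (∃ i, 0 < w i) ∧ (∃ j, w j < 0) := by
  constructor
  · by_contra h
    push_neg at h
    rcases hk.lt_or_gt with hlt | hlt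
    · have : ∑ i, w i < 0 := by
        apply Finset.sum_neg' (fun i _ => h i) ⟨k, Finset.mem_univ k, hlt⟩
      linarith
    · exact absurd hlt (not_lt.2 (h k))
  · by_contra h
    push_neg at h
    rcases hk.lt_or_gt with hlt | hlt
    · exact absurd hlt (not_lt.2 (h k))
    · have : 0 < ∑ i, w i :=
        Finset.sum_pos' (fun i _ => h i) ⟨k, Finset.mem_univ k, hlt⟩
      linarith

set_option maxHeartbeats 4000000 in
/-- If `G` is a graph on `n ≥ 3` vertices whose distinct Laplacian eigenvalues are exactly
`0 < α < β`, with `α` of multiplicity `n - 2`, then `G` is the complete bipartite graph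
`K_{n/2,n/2}` (so `n` is even) or the star `S_n`. -/
theorem stmt_17 (n : ℕ) (hn : 3 ≤ n) (G : SimpleGraph (Fin n)) [DecidableRel G.Adj]
    (α β : ℝ) (hα : 0 < α) (hαβ : α < β)
    (h0 : IsEigenvalue (G.lapMatrix ℝ) 0)
    (hβ : IsEigenvalue (G.lapMatrix ℝ) β)
    (hmult : eigMult (G.lapMatrix ℝ) α = n - 2)
    (hall : ∀ μ : ℝ, IsEigenvalue (G.lapMatrix ℝ) μ → μ = 0 ∨ μ = α ∨ μ = β) :
    (2 ∣ n ∧ Nonempty (G ≃g multipartiteOn n (fun v => if v.val < n / 2 then 0 else 1))) ∨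
      Nonempty (G ≃g starGraph n) := by
  classical
  have h0 : Module.End.HasEigenvalue (Matrix.toLin' (G.lapMatrix ℝ)) 0 := h0
  have hβ : Module.End.HasEigenvalue (Matrix.toLin' (G.lapMatrix ℝ)) β := hβ
  have hmult : Module.finrank ℝ
      ↥(Module.End.eigenspace (Matrix.toLin' (G.lapMatrix ℝ)) α) = n - 2 := hmult
  clear hall
  have hn0 : (0:ℝ) < n := by exact_mod_cast Nat.lt_of_lt_of_le (by norm_num) hn
  set L := G.lapMatrix ℝ with hLdef
  have hβ0 : β ≠ 0 := by linarith
  have hα0 : α ≠ 0 := ne_of_gt hα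
  have hβα : β ≠ α := ne_of_gt hαβ
  -- symmetry
  have hsymm : Lᵀ = L := G.isSymm_lapMatrix (R := ℝ)
  have hdot : ∀ x y : Fin n → ℝ, (L *ᵥ x) ⬝ᵥ y = x ⬝ᵥ (L *ᵥ y) := by
    intro x y
    rw [Matrix.dotProduct_mulVec x L y, ← hsymm, Matrix.mulVec_transpose, hsymm,
      dotProduct_comm]
  set E : ℝ → Submodule ℝ (Fin n → ℝ) :=
    fun μ => Module.End.eigenspace (Matrix.toLin' L) μ with hEdef
  have hmem : ∀ {μ : ℝ} {x : Fin n → ℝ}, x ∈ E μ ↔ L *ᵥ x = μ • x := by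
    intro μ x
    rw [hEdef, Module.End.mem_eigenspace_iff, Matrix.toLin'_apply]
  have h1mem : (fun _ => (1:ℝ)) ∈ E 0 :=
    hmem.mpr (by rw [G.lapMatrix_mulVec_const_eq_zero, zero_smul])
  have hone_ne : (fun _ => (1:ℝ)) ≠ (0 : Fin n → ℝ) := by
    intro h
    have := congrFun h ⟨0, by omega⟩
    norm_num at this
  -- eigenvectors for nonzero eigenvalues sum to zero
  have hsum : ∀ (μ : ℝ) (x : Fin n → ℝ), μ ≠ 0 → x ∈ E μ → ∑ i, x i = 0 := by
    intro μ x hμ hx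
    have h1 : (L *ᵥ x) ⬝ᵥ (fun _ => 1) = x ⬝ᵥ (L *ᵥ fun _ => 1) := hdot x _
    rw [G.lapMatrix_mulVec_const_eq_zero, dotProduct_zero, hmem.mp hx,
      smul_dotProduct] at h1
    have h2 : x ⬝ᵥ (fun _ => (1:ℝ)) = ∑ i, x i := by simp [dotProduct]
    rw [h2] at h1
    rcases mul_eq_zero.mp h1 with h | h
    · exact absurd h hμ
    · exact h
  -- orthogonality of eigenspaces
  have horth : ∀ (μ ν : ℝ) (x y : Fin n → ℝ), μ ≠ ν → x ∈ E μ → y ∈ E ν →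
      x ⬝ᵥ y = 0 := by
    intro μ ν x y hμν hx hy
    have h1 : (L *ᵥ x) ⬝ᵥ y = x ⬝ᵥ (L *ᵥ y) := hdot x y
    rw [hmem.mp hx, hmem.mp hy, smul_dotProduct, dotProduct_smul,
      smul_eq_mul, smul_eq_mul] at h1
    have := sub_eq_zero.mpr h1
    rw [← sub_mul] at this
    rcases mul_eq_zero.mp this with h | h
    · exact absurd (sub_eq_zero.mp h) hμν
    · exact h
  have hdisj : ∀ (μ ν : ℝ), μ ≠ ν → ∀ x, x ∈ E μ → x ∈ E ν → x = 0 := by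
    intro μ ν hμν x hx hx'
    exact dotProduct_self_eq_zero.mp (horth μ ν x x hμν hx hx')
  -- dimension bookkeeping
  have h0α : E 0 ⊓ E α = ⊥ := by
    rw [Submodule.eq_bot_iff]
    rintro x ⟨hx1, hx2⟩
    exact hdisj 0 α (by exact hα0.symm) x hx1 hx2
  have h0αβ : (E 0 ⊔ E α) ⊓ E β = ⊥ := by
    rw [Submodule.eq_bot_iff]
    rintro x ⟨hx1, hx2⟩
    rcases Submodule.mem_sup.mp hx1 with ⟨y, hy, z, hz, rfl⟩
    apply dotProduct_self_eq_zero.mp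
    rw [dotProduct_add, horth β 0 _ y hβ0 hx2 hy, horth β α _ z hβα hx2 hz,
      add_zero]
  have hr1 := Submodule.finrank_sup_add_finrank_inf_eq (E 0) (E α)
  rw [h0α, finrank_bot, add_zero] at hr1
  have hr2 := Submodule.finrank_sup_add_finrank_inf_eq (E 0 ⊔ E α) (E β)
  rw [h0αβ, finrank_bot, add_zero, hr1] at hr2
  have hrle : Module.finrank ℝ ↥(E 0 ⊔ E α ⊔ E β) ≤ n := by
    have := Submodule.finrank_le (E 0 ⊔ E α ⊔ E β)
    rwa [Module.finrank_pi, Fintype.card_fin] at this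
  have hpos : ∀ (μ : ℝ), Module.End.HasEigenvalue (Matrix.toLin' L) μ →
      1 ≤ Module.finrank ℝ ↥(E μ) := by
    intro μ hμ
    obtain ⟨v, hv, hv0⟩ := hμ.exists_hasEigenvector
    have hsp : Submodule.span ℝ {v} ≤ E μ := by
      rw [Submodule.span_le, Set.singleton_subset_iff]; exact hv
    calc 1 = Module.finrank ℝ ↥(Submodule.span ℝ {v}) := (finrank_span_singleton hv0).symm
    _ ≤ Module.finrank ℝ ↥(E μ) := Submodule.finrank_mono hsp
  have hmult' : Module.finrank ℝ ↥(E α) = n - 2 := hmult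
  have hd0 : Module.finrank ℝ ↥(E 0) = 1 := by
    have := hpos 0 h0
    have := hpos β hβ
    omega
  have hdβ : Module.finrank ℝ ↥(E β) = 1 := by
    have := hpos 0 h0
    have := hpos β hβ
    omega
  have htop : E 0 ⊔ E α ⊔ E β = ⊤ := by
    apply Submodule.eq_top_of_finrank_eq
    rw [hr2, hd0, hdβ, hmult', Module.finrank_pi, Fintype.card_fin]
    omega
  have hE0 : E 0 = Submodule.span ℝ {fun _ => (1:ℝ)} := by
    symm
    apply Submodule.eq_of_le_of_finrank_eq
    · rw [Submodule.span_le, Set.singleton_subset_iff]; exact h1mem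
    · rw [finrank_span_singleton hone_ne, hd0]
  obtain ⟨w, hwE, hw0⟩ := hβ.exists_hasEigenvector
  have hwE : w ∈ E β := hwE
  have hEβ : E β = Submodule.span ℝ {w} := by
    symm
    apply Submodule.eq_of_le_of_finrank_eq
    · rw [Submodule.span_le, Set.singleton_subset_iff]; exact hwE
    · rw [finrank_span_singleton hw0, hdβ]
  have hww : 0 < w ⬝ᵥ w := by
    rcases lt_or_eq_of_le (Finset.sum_nonneg (fun i _ => mul_self_nonneg (w i))) with h | h
    · exact h
    · exact absurd (dotProduct_self_eq_zero.mp h.symm) hw0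
  set c : ℝ := (β - α) / (w ⬝ᵥ w) with hcdef
  have hc : 0 < c := div_pos (by linarith) hww
  have hwsum : ∑ i, w i = 0 := hsum β w hβ0 hwE
  set M' : Matrix (Fin n) (Fin n) ℝ :=
    Matrix.of (fun i j => (if i = j then α else 0) - α/n + c * (w i * w j)) with hM'def
  have hM'apply : ∀ (x : Fin n → ℝ) (i : Fin n),
      (M' *ᵥ x) i = α * x i - α/n * (∑ j, x j) + c * w i * (w ⬝ᵥ x) := by
    intro x i
    show (∑ j, ((if i = j then α else 0) - α/n + c * (w i * w j)) * x j) = _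
    have he : ∀ j, ((if i = j then α else 0) - α/n + c * (w i * w j)) * x j
        = (if i = j then α * x j else 0) - (α/n) * x j + (c * w i) * (w j * x j) := by
      intro j; split <;> ring
    simp_rw [he]
    rw [Finset.sum_add_distrib, Finset.sum_sub_distrib, Finset.sum_ite_eq,
      ← Finset.mul_sum, ← Finset.mul_sum]
    simp [dotProduct, mul_assoc]
  have key : ∀ x, L *ᵥ x = M' *ᵥ x := by
    have hsub : E 0 ⊔ E α ⊔ E β ≤ LinearMap.ker (Matrix.toLin' (L - M')) := by
      refine sup_le (sup_le ?_ ?_) ?_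
      · intro x hx
        rw [hE0] at hx
        obtain ⟨a, rfl⟩ := Submodule.mem_span_singleton.mp hx
        rw [LinearMap.mem_ker, Matrix.toLin'_apply, Matrix.sub_mulVec, sub_eq_zero,
          Matrix.mulVec_smul, Matrix.mulVec_smul, G.lapMatrix_mulVec_const_eq_zero]
        have : M' *ᵥ (fun _ => (1:ℝ)) = 0 := by
          ext i
          rw [hM'apply]
          have hw1 : w ⬝ᵥ (fun _ => (1:ℝ)) = 0 := by
            simpa [dotProduct] using hwsum
          rw [hw1, Finset.sum_const, Finset.card_univ, Fintype.card_fin]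
          simp only [mul_one, mul_zero, add_zero, nsmul_eq_mul]
          field_simp
          simp
        rw [this, smul_zero]
      · intro x hx
        rw [LinearMap.mem_ker, Matrix.toLin'_apply, Matrix.sub_mulVec, sub_eq_zero,
          hmem.mp hx]
        ext i
        rw [hM'apply, hsum α x hα0 hx, horth β α w x hβα hwE hx]
        simp
      · intro x hx
        rw [hEβ] at hx
        obtain ⟨a, rfl⟩ := Submodule.mem_span_singleton.mp hx
        rw [LinearMap.mem_ker, Matrix.toLin'_apply, Matrix.sub_mulVec, sub_eq_zero,
          Matrix.mulVec_smul, Matrix.mulVec_smul, hmem.mp hwE]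
        congr 1
        ext i
        rw [hM'apply, hwsum]
        have hcw : c * w i * (w ⬝ᵥ w) = (β - α) * w i := by
          rw [mul_comm c (w i), mul_assoc, div_mul_cancel₀ _ (ne_of_gt hww)]
          ring
        rw [hcw]
        simp only [Pi.smul_apply, smul_eq_mul]
        ring
    intro x
    have hx : x ∈ LinearMap.ker (Matrix.toLin' (L - M')) := by
      apply hsub
      rw [htop]
      exact Submodule.mem_top
    rw [LinearMap.mem_ker, Matrix.toLin'_apply, Matrix.sub_mulVec, sub_eq_zero] at hx
    exact hx
  -- entrywise identity
  have hLM : ∀ i j, L i j = M' i j := by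
    intro i j
    have h := congrFun (key (Pi.single j 1)) i
    simpa using h
  have keyval : ∀ i j : Fin n, i ≠ j →
      c * (w i * w j) = α/n - (if G.Adj i j then 1 else 0) := by
    intro i j hij
    have h := hLM i j
    have hoff : L i j = -(if G.Adj i j then 1 else 0) := by
      simp [hLdef, SimpleGraph.lapMatrix, SimpleGraph.degMatrix,
        Matrix.diagonal_apply_ne _ hij]
    rw [hoff] at h
    have h2 : M' i j = (0:ℝ) - α/n + c * (w i * w j) := by
      simp [hM'def, if_neg hij]
    rw [h2] at h
    linarith

  -- sign analysis
  have hprod_adj : ∀ i j, G.Adj i j → c * (w i * w j) = α/n - 1 := by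
    intro i j hij
    have h := keyval i j (G.ne_of_adj hij)
    rwa [if_pos hij] at h
  have hprod_non : ∀ i j, i ≠ j → ¬ G.Adj i j → c * (w i * w j) = α/n := by
    intro i j hij hna
    have h := keyval i j hij
    rwa [if_neg hna, sub_zero] at h
  have hαn : 0 < α / n := div_pos hα hn0
  obtain ⟨k0, hk0⟩ := Function.ne_iff.mp hw0
  obtain ⟨⟨i0, hi0⟩, ⟨j0, hj0⟩⟩ := aux_pos_neg w hwsum hk0
  have hneg1 : α/n - 1 < 0 := by
    have hne : i0 ≠ j0 := by rintro rfl; linarith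
    have hlt : c * (w i0 * w j0) < 0 :=
      mul_neg_of_pos_of_neg hc (mul_neg_of_pos_of_neg hi0 hj0)
    by_cases hA : G.Adj i0 j0
    · rw [hprod_adj _ _ hA] at hlt; exact hlt
    · rw [hprod_non _ _ hne hA] at hlt; linarith
  have hwne : ∀ k, w k ≠ 0 := by
    intro k hk
    have hklt : (if (k:ℕ) = 0 then 1 else 0) < n := by split <;> omega
    set j : Fin n := ⟨if (k:ℕ) = 0 then 1 else 0, hklt⟩ with hjdef
    have hkj : (k : ℕ) ≠ (j : ℕ) := by
      rw [hjdef]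
      simp only []
      split <;> omega
    have hkj' : k ≠ j := fun h => hkj (congrArg Fin.val h)
    have h := keyval k j hkj'
    rw [hk, zero_mul, mul_zero] at h
    by_cases hA : G.Adj k j
    · rw [if_pos hA] at h; linarith
    · rw [if_neg hA] at h; linarith
  have hadj : ∀ i j, G.Adj i j ↔ w i * w j < 0 := by
    intro i j
    constructor
    · intro hA
      have h := hprod_adj i j hA
      by_contra hge
      push_neg at hge
      linarith [mul_nonneg hc.le hge]
    · intro hlt
      have hij : i ≠ j := by
        rintro rfl
        linarith [mul_self_nonneg (w i)]
      by_cases hA : G.Adj i j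
      · exact hA
      · exfalso
        have h := hprod_non i j hij hA
        linarith [mul_neg_of_pos_of_neg hc hlt]
  have hval_cross : ∀ i j, 0 < w i → w j < 0 → c * (w i * w j) = α/n - 1 := by
    intro i j h1 h2
    exact hprod_adj i j ((hadj i j).mpr (mul_neg_of_pos_of_neg h1 h2))
  have ha : ∀ i, 0 < w i → w i = w i0 := by
    intro i hi
    have h1 := hval_cross i j0 hi hj0
    have h2 := hval_cross i0 j0 hi0 hj0
    have h3 := mul_left_cancel₀ (ne_of_gt hc) (h1.trans h2.symm)
    exact mul_right_cancel₀ (ne_of_lt hj0) h3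
  have hb : ∀ j, w j < 0 → w j = w j0 := by
    intro j hj
    have h1 := hval_cross i0 j hi0 hj
    have h2 := hval_cross i0 j0 hi0 hj0
    have h3 := mul_left_cancel₀ (ne_of_gt hc) (h1.trans h2.symm)
    exact mul_left_cancel₀ (ne_of_gt hi0) h3
  -- the bipartition
  set P := Finset.univ.filter (fun i => 0 < w i) with hPdef
  set Q := Finset.univ.filter (fun i => w i < 0) with hQdef
  have hmemP : ∀ i, i ∈ P ↔ 0 < w i := by intro i; simp [hPdef]
  have hmemQ : ∀ i, i ∈ Q ↔ w i < 0 := by intro i; simp [hQdef]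
  have hnotP : ∀ i, i ∉ P ↔ w i < 0 := by
    intro i
    rw [hmemP]
    constructor
    · intro h
      rcases (hwne i).lt_or_gt with h' | h'
      · exact h'
      · exact absurd h' h
    · intro h h'; linarith
  have hQP : Q = Finset.univ.filter (fun i => ¬ 0 < w i) := by
    ext i
    simp only [hQdef, Finset.mem_filter, Finset.mem_univ, true_and]
    constructor
    · intro h; linarith
    · intro h
      rcases (hwne i).lt_or_gt with h' | h'
      · exact h'
      · exact absurd h' h
  have hpq : P.card + Q.card = n := by
    rw [hQP, Finset.card_filter_add_card_filter_not, Finset.card_univ,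
      Fintype.card_fin]
  have hsplit : (∑ i ∈ P, w i) + (∑ i ∈ Q, w i) = 0 := by
    rw [hQP, hPdef, Finset.sum_filter_add_sum_filter_not, hwsum]
  have hsumP : ∑ i ∈ P, w i = (P.card : ℝ) * w i0 := by
    rw [Finset.sum_congr rfl (fun i hi => ha i ((hmemP i).mp hi)), Finset.sum_const,
      nsmul_eq_mul]
  have hsumQ : ∑ i ∈ Q, w i = (Q.card : ℝ) * w j0 := by
    rw [Finset.sum_congr rfl (fun i hi => hb i ((hmemQ i).mp hi)), Finset.sum_const,
      nsmul_eq_mul]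
  have hbal : (P.card : ℝ) * w i0 + (Q.card : ℝ) * w j0 = 0 := by
    rw [← hsumP, ← hsumQ, hsplit]
  have hPpos : 0 < P.card := Finset.card_pos.mpr ⟨i0, (hmemP i0).mpr hi0⟩
  have hQpos : 0 < Q.card := Finset.card_pos.mpr ⟨j0, (hmemQ j0).mpr hj0⟩
  -- star helper
  have hstar : ∀ z : Fin n, (∀ u v, G.Adj u v ↔ (u ≠ v ∧ (u = z ∨ v = z))) →
      Nonempty (G ≃g starGraph n) := by
    intro z hz
    haveI : NeZero n := ⟨by omega⟩
    refine ⟨⟨Equiv.swap z 0, ?_⟩⟩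
    intro u v
    have hval : ∀ x : Fin n, ((Equiv.swap z 0) x : ℕ) = 0 ↔ x = z := by
      intro x
      constructor
      · intro h
        have h0 : (Equiv.swap z 0) x = 0 := by
          apply Fin.ext
          rw [h, Fin.val_zero]
        have : (Equiv.swap z 0) x = (Equiv.swap z 0) z := by
          rw [h0, Equiv.swap_apply_left]
        exact (Equiv.swap z 0).injective this
      · rintro rfl
        rw [Equiv.swap_apply_left, Fin.val_zero]
    rw [starGraph, SimpleGraph.fromRel_adj, hz u v, hval u, hval v,
      (Equiv.swap z 0).injective.ne_iff]
  -- case analysis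
  by_cases hp1 : P.card = 1
  · obtain ⟨z, hz⟩ := Finset.card_eq_one.mp hp1
    have hzi : i0 = z := by
      have h := (hmemP i0).mpr hi0
      rw [hz, Finset.mem_singleton] at h
      exact h
    subst hzi
    refine Or.inr (hstar i0 ?_)
    intro u v
    have hP1 : ∀ x, 0 < w x ↔ x = i0 := by
      intro x
      constructor
      · intro hx
        have h := (hmemP x).mpr hx
        rw [hz, Finset.mem_singleton] at h
        exact h
      · rintro rfl; exact hi0
    have hneg : ∀ x, x ≠ i0 → w x < 0 := by
      intro x hx
      rcases (hwne x).lt_or_gt with h | h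
      · exact h
      · exact absurd ((hP1 x).mp h) hx
    rw [hadj u v]
    constructor
    · intro hlt
      have hne : u ≠ v := by
        rintro rfl
        linarith [mul_self_nonneg (w u)]
      rcases mul_neg_iff.mp hlt with ⟨h1, h2⟩ | ⟨h1, h2⟩
      · exact ⟨hne, Or.inl ((hP1 u).mp h1)⟩
      · exact ⟨hne, Or.inr ((hP1 v).mp h2)⟩
    · rintro ⟨hne, rfl | rfl⟩
      · exact mul_neg_of_pos_of_neg hi0 (hneg v (Ne.symm hne))
      · exact mul_neg_of_neg_of_pos (hneg u hne) hi0
  · by_cases hq1 : Q.card = 1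
    · obtain ⟨z, hz⟩ := Finset.card_eq_one.mp hq1
      have hzj : j0 = z := by
        have h := (hmemQ j0).mpr hj0
        rw [hz, Finset.mem_singleton] at h
        exact h
      subst hzj
      refine Or.inr (hstar j0 ?_)
      intro u v
      have hQ1 : ∀ x, w x < 0 ↔ x = j0 := by
        intro x
        constructor
        · intro hx
          have h := (hmemQ x).mpr hx
          rw [hz, Finset.mem_singleton] at h
          exact h
        · rintro rfl; exact hj0
      have hposx : ∀ x, x ≠ j0 → 0 < w x := by
        intro x hx
        rcases (hwne x).lt_or_gt with h | h
        · exact absurd ((hQ1 x).mp h) hx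
        · exact h
      rw [hadj u v]
      constructor
      · intro hlt
        have hne : u ≠ v := by
          rintro rfl
          linarith [mul_self_nonneg (w u)]
        rcases mul_neg_iff.mp hlt with ⟨h1, h2⟩ | ⟨h1, h2⟩
        · exact ⟨hne, Or.inr ((hQ1 v).mp h2)⟩
        · exact ⟨hne, Or.inl ((hQ1 u).mp h1)⟩
      · rintro ⟨hne, rfl | rfl⟩
        · exact mul_neg_of_neg_of_pos ((hQ1 u).mpr rfl) (hposx v (Ne.symm hne))
        · exact mul_neg_of_pos_of_neg (hposx u hne) ((hQ1 v).mpr rfl)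
    · -- both parts have at least two vertices : complete bipartite with equal parts
      have hp2 : 2 ≤ P.card := by omega
      have hq2 : 2 ≤ Q.card := by omega
      obtain ⟨x1, hx1, x2, hx2, hx12⟩ := Finset.one_lt_card.mp hp2
      obtain ⟨y1, hy1, y2, hy2, hy12⟩ := Finset.one_lt_card.mp hq2
      rw [hmemP] at hx1 hx2
      rw [hmemQ] at hy1 hy2
      have hP_non : c * (w x1 * w x2) = α/n := by
        apply hprod_non _ _ hx12
        intro hA
        have := (hadj x1 x2).mp hA
        linarith [mul_pos hx1 hx2]
      have hQ_non : c * (w y1 * w y2) = α/n := by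
        apply hprod_non _ _ hy12
        intro hA
        have := (hadj y1 y2).mp hA
        linarith [mul_pos_of_neg_of_neg hy1 hy2]
      rw [ha x1 hx1, ha x2 hx2] at hP_non
      rw [hb y1 hy1, hb y2 hy2] at hQ_non
      have hsq : w i0 * w i0 = w j0 * w j0 :=
        mul_left_cancel₀ (ne_of_gt hc) (hP_non.trans hQ_non.symm)
      have haa : w i0 = - w j0 := by
        rcases mul_self_eq_mul_self_iff.mp hsq with h | h
        · linarith
        · exact h
      have hcard : P.card = Q.card := by
        have h1 : (P.card : ℝ) * w i0 = (Q.card : ℝ) * w i0 := by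
          rw [haa] at hbal ⊢
          linarith
        have h2 : (P.card : ℝ) = (Q.card : ℝ) :=
          mul_right_cancel₀ (ne_of_gt hi0) h1
        exact_mod_cast h2
      have hn2 : n = 2 * P.card := by omega
      have hdvd : 2 ∣ n := ⟨P.card, hn2⟩
      have hhalf : n / 2 = P.card := by omega
      set F := Finset.univ.filter (fun v : Fin n => (v:ℕ) < n/2) with hFdef
      have hFcard : F.card = n/2 := aux_filter_card (by omega)
      obtain ⟨σ, hσ⟩ := aux_perm P F (by rw [hFcard, hhalf])
      refine Or.inl ⟨hdvd, ⟨⟨σ, ?_⟩⟩⟩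
      intro u v
      have hmp : ∀ a b : Fin n,
          (multipartiteOn n (fun v => if (v:ℕ) < n/2 then 0 else 1)).Adj a b ↔
          (a ≠ b ∧ ¬(((a:ℕ) < n/2) ↔ ((b:ℕ) < n/2))) := by
        intro a b
        rw [multipartiteOn, SimpleGraph.fromRel_adj]
        by_cases h1 : (a:ℕ) < n/2 <;> by_cases h2 : (b:ℕ) < n/2 <;> simp [h1, h2]
      have hσF : ∀ x, ((σ x : ℕ) < n/2) ↔ x ∈ P := by
        intro x
        rw [← hσ x, hFdef]
        simp
      have hGadj : G.Adj u v ↔ ((u ∈ P ∧ v ∉ P) ∨ (u ∉ P ∧ v ∈ P)) := by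
        rw [hadj, mul_neg_iff]
        constructor
        · rintro (⟨h1, h2⟩ | ⟨h1, h2⟩)
          · exact Or.inl ⟨(hmemP u).mpr h1, (hnotP v).mpr h2⟩
          · exact Or.inr ⟨(hnotP u).mpr h1, (hmemP v).mpr h2⟩
        · rintro (⟨h1, h2⟩ | ⟨h1, h2⟩)
          · exact Or.inl ⟨(hmemP u).mp h1, (hnotP v).mp h2⟩
          · exact Or.inr ⟨(hnotP u).mp h1, (hmemP v).mp h2⟩
      rw [hmp, hσF u, hσF v, hGadj, σ.injective.ne_iff]
      constructor
      · rintro ⟨hne, hiff⟩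
        tauto
      · rintro (⟨h1, h2⟩ | ⟨h1, h2⟩)
        · exact ⟨fun h => h2 (h ▸ h1), fun h => h2 (h.mp h1)⟩
        · exact ⟨fun h => h1 (h.symm ▸ h2), fun h => h1 (h.mpr h2)⟩
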